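/- For any Π⁰₁ class P ⊆ 2^ℕ, the index set I(W[P]) = { e : deg_T(W_e) is the Turing degree of some element of P } is Σ⁰₄. -/

import Mathlib

open Classical

/-- The characteristic function (into `ℕ`) of a set of naturals, as a partial function,
used as an oracle. -/
noncomputable def chi (A : Set ℕ) : ℕ →. ℕ :=
  fun n => Part.some (if n ∈ A then 1 else 0)

/-- The characteristic function (into `Bool`) of a set of naturals. -/
noncomputable def chib (A : Set ℕ) : ℕ → Bool :=
  fun n => decide (n ∈ A)

/-- Codes for oracle Turing machines: partial recursive functions relative to an oracle. -/
inductive OCode : Type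
  | zero | succ | left | right | oracle
  | pair : OCode → OCode → OCode
  | comp : OCode → OCode → OCode
  | prec : OCode → OCode → OCode
  | rfind' : OCode → OCode

/-- Evaluation of an oracle machine code relative to the oracle `g`. -/
def OCode.eval (g : ℕ →. ℕ) : OCode → ℕ →. ℕ
  | .zero => pure 0
  | .succ => fun n => Part.some (n + 1)
  | .left => fun n => Part.some (Nat.unpair n).1
  | .right => fun n => Part.some (Nat.unpair n).2
  | .oracle => g
  | .pair cf cg => fun n => Nat.pair <$> OCode.eval g cf n <*> OCode.eval g cg n
  | .comp cf cg => fun n => OCode.eval g cg n >>= OCode.eval g cf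
  | .prec cf cg =>
    Nat.unpaired fun a n =>
      n.rec (OCode.eval g cf a) fun y IH => do
        let i ← IH
        OCode.eval g cg (Nat.pair a (Nat.pair y i))
  | .rfind' cf =>
    Nat.unpaired fun a m =>
      (Nat.rfind fun n => (fun m => m = 0) <$> OCode.eval g cf (Nat.pair a (n + m))).map (· + m)

/-- An enumeration of the oracle machine codes by natural numbers. -/
def OCode.ofNat : ℕ → OCode
  | 0 => .zero
  | 1 => .succ
  | 2 => .left
  | 3 => .right
  | 4 => .oracle
  | n + 5 =>
    let m := n.div2.div2
    have hm : m < n + 5 := by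
      simp only [m, Nat.div2_val]
      exact
        lt_of_le_of_lt (le_trans (Nat.div_le_self _ _) (Nat.div_le_self _ _))
          (Nat.lt_succ_of_le (Nat.le_add_right _ _))
    have _m1 : m.unpair.1 < n + 5 := lt_of_le_of_lt m.unpair_left_le hm
    have _m2 : m.unpair.2 < n + 5 := lt_of_le_of_lt m.unpair_right_le hm
    match n.bodd, n.div2.bodd with
    | false, false => .pair (OCode.ofNat m.unpair.1) (OCode.ofNat m.unpair.2)
    | false, true  => .comp (OCode.ofNat m.unpair.1) (OCode.ofNat m.unpair.2)
    | true , false => .prec (OCode.ofNat m.unpair.1) (OCode.ofNat m.unpair.2)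
    | true , true  => .rfind' (OCode.ofNat m)
decreasing_by all_goals first | exact _m1 | exact _m2 | exact hm

/-- `B` is Turing reducible to `A`: some oracle machine with oracle (the characteristic
function of) `A` computes the characteristic function of `B`. -/
def TuringReducibleSet (B A : Set ℕ) : Prop :=
  ∃ c : OCode, ∀ n, OCode.eval (chi A) c n = Part.some (if n ∈ B then 1 else 0)

/-- Turing equivalence of sets of naturals. -/
def TuringEquiv (A B : Set ℕ) : Prop :=
  TuringReducibleSet A B ∧ TuringReducibleSet B A

/-- A set of naturals is computably enumerable iff it is the domain of a partial
computable function. -/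
def CE (A : Set ℕ) : Prop :=
  ∃ c : Nat.Partrec.Code, A = { n | (c.eval n).Dom }

/-- A set has c.e. (Turing) degree iff it is Turing equivalent to a c.e. set. -/
def CEDegree (X : Set ℕ) : Prop :=
  ∃ W : Set ℕ, CE W ∧ TuringEquiv X W

/-- The halting problem `∅′`. -/
def HaltingSet : Set ℕ :=
  { e | ((Denumerable.ofNat Nat.Partrec.Code e).eval e).Dom }

/-- The `e`-th computably enumerable set `W_e`. -/
def WSet (e : ℕ) : Set ℕ :=
  { n | ((Denumerable.ofNat Nat.Partrec.Code e).eval n).Dom }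

/-- `B` is weak truth table reducible to `A` with use bound `f`: a partial computable
functional, given `x` and the first `f x` bits of `A`, converges to `B(x)`. -/
def WttReducibleWith (f : ℕ → ℕ) (B A : Set ℕ) : Prop :=
  ∃ F : ℕ → List Bool →. Bool, Partrec₂ F ∧
    ∀ x, F x ((List.range (f x)).map (chib A)) = Part.some (chib B x)

/-- Weak truth table reducibility: Turing reducibility with computably bounded use. -/
def WttReducible (B A : Set ℕ) : Prop :=
  ∃ f : ℕ → ℕ, Computable f ∧ WttReducibleWith f B A

/-- A `Π⁰₁` class: the set of infinite paths through a computable binary tree. -/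
def Pi01Class (P : Set (Set ℕ)) : Prop :=
  ∃ T : List Bool → Bool, Computable T ∧
    ∀ Z : Set ℕ, Z ∈ P ↔ ∀ n, T ((List.range n).map (chib Z)) = true

/-- A `Σ⁰₄` set of naturals: a four-quantifier form over a computable matrix. -/
def Sigma04 (S : Set ℕ) : Prop :=
  ∃ R : ℕ × ℕ × ℕ × ℕ × ℕ → Bool, Computable R ∧
    ∀ e, e ∈ S ↔ ∃ a, ∀ b, ∃ c, ∀ d, R (e, a, b, c, d) = true


namespace Stmt6

open Nat.Partrec (Code)
open Nat.Partrec.Code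

/-! ### Encoding of `OCode` -/

def encodeO : OCode → ℕ
  | .zero => 0
  | .succ => 1
  | .left => 2
  | .right => 3
  | .oracle => 4
  | .pair cf cg => 4 * Nat.pair (encodeO cf) (encodeO cg) + 5
  | .comp cf cg => 4 * Nat.pair (encodeO cf) (encodeO cg) + 7
  | .prec cf cg => 4 * Nat.pair (encodeO cf) (encodeO cg) + 6
  | .rfind' cf => 4 * encodeO cf + 8

theorem bodd_mod2 (n : ℕ) : Nat.bodd n = decide (n % 2 = 1) := by
  induction n with
  | zero => rfl
  | succ k ih =>
      rw [Nat.bodd_succ, ih]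
      rcases Nat.mod_two_eq_zero_or_one k with h | h <;> simp [Nat.succ_mod_two_eq_one_iff, Nat.succ_mod_two_eq_zero_iff, h]

theorem ofNat_encodeO : ∀ c : OCode, OCode.ofNat (encodeO c) = c := by
  intro c
  induction c with
  | zero => simp [encodeO, OCode.ofNat]
  | succ => simp [encodeO, OCode.ofNat]
  | left => simp [encodeO, OCode.ofNat]
  | right => simp [encodeO, OCode.ofNat]
  | oracle => simp [encodeO, OCode.ofNat]
  | pair cf cg ih1 ih2 =>
      show OCode.ofNat (4 * Nat.pair (encodeO cf) (encodeO cg) + 5) = _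
      rw [OCode.ofNat]
      have h1 : (4 * Nat.pair (encodeO cf) (encodeO cg)).bodd = false := by
        rw [bodd_mod2]; simp; omega
      have h2 : (4 * Nat.pair (encodeO cf) (encodeO cg)).div2.bodd = false := by
        rw [Nat.div2_val, bodd_mod2]; simp; omega
      have h3 : (4 * Nat.pair (encodeO cf) (encodeO cg)).div2.div2 = Nat.pair (encodeO cf) (encodeO cg) := by
        rw [Nat.div2_val, Nat.div2_val]; omega
      simp only [h1, h2, h3, Nat.unpair_pair, ih1, ih2]
  | comp cf cg ih1 ih2 =>
      show OCode.ofNat (4 * Nat.pair (encodeO cf) (encodeO cg) + 2 + 5) = _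
      rw [OCode.ofNat]
      have h1 : (4 * Nat.pair (encodeO cf) (encodeO cg) + 2).bodd = false := by
        rw [bodd_mod2]; simp; omega
      have h2 : (4 * Nat.pair (encodeO cf) (encodeO cg) + 2).div2.bodd = true := by
        rw [Nat.div2_val, bodd_mod2]; simp; omega
      have h3 : (4 * Nat.pair (encodeO cf) (encodeO cg) + 2).div2.div2 = Nat.pair (encodeO cf) (encodeO cg) := by
        rw [Nat.div2_val, Nat.div2_val]; omega
      simp only [h1, h2, h3, Nat.unpair_pair, ih1, ih2]
  | prec cf cg ih1 ih2 =>
      show OCode.ofNat (4 * Nat.pair (encodeO cf) (encodeO cg) + 1 + 5) = _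
      rw [OCode.ofNat]
      have h1 : (4 * Nat.pair (encodeO cf) (encodeO cg) + 1).bodd = true := by
        rw [bodd_mod2]; simp; omega
      have h2 : (4 * Nat.pair (encodeO cf) (encodeO cg) + 1).div2.bodd = false := by
        rw [Nat.div2_val, bodd_mod2]; simp; omega
      have h3 : (4 * Nat.pair (encodeO cf) (encodeO cg) + 1).div2.div2 = Nat.pair (encodeO cf) (encodeO cg) := by
        rw [Nat.div2_val, Nat.div2_val]; omega
      simp only [h1, h2, h3, Nat.unpair_pair, ih1, ih2]
  | rfind' cf ih =>
      show OCode.ofNat (4 * encodeO cf + 3 + 5) = _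
      rw [OCode.ofNat]
      have h1 : (4 * encodeO cf + 3).bodd = true := by
        rw [bodd_mod2]; simp; omega
      have h2 : (4 * encodeO cf + 3).div2.bodd = true := by
        rw [Nat.div2_val, bodd_mod2]; simp; omega
      have h3 : (4 * encodeO cf + 3).div2.div2 = encodeO cf := by
        rw [Nat.div2_val, Nat.div2_val]; omega
      simp only [h1, h2, h3, ih]


/-! ### Partial oracles -/

def partOracle (σ : List Bool) : ℕ →. ℕ :=
  fun n => Part.ofOption ((σ[n]?).map fun b => cond b 1 0)

noncomputable def seg (Z : Set ℕ) (k : ℕ) : List Bool := (List.range k).map (chib Z)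

theorem seg_get? (Z : Set ℕ) (k n : ℕ) :
    (seg Z k)[n]? = if n < k then some (chib Z n) else none := by
  by_cases h : n < k
  · simp [seg, h]
  · simp only [if_neg h]
    exact List.getElem?_eq_none (by simp [seg, le_of_not_gt h])

theorem mem_partOracle {σ : List Bool} {n a : ℕ} :
    a ∈ partOracle σ n ↔ ∃ b, σ[n]? = some b ∧ cond b 1 0 = a := by
  simp [partOracle, Part.mem_ofOption]

theorem chi_eq (Z : Set ℕ) (n : ℕ) : chi Z n = Part.some (cond (chib Z n) 1 0) := by
  by_cases h : n ∈ Z <;> simp [chi, chib, h]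

theorem partOracle_le_chi {Z : Set ℕ} {k n a : ℕ}
    (h : a ∈ partOracle (seg Z k) n) : a ∈ chi Z n := by
  rw [mem_partOracle] at h
  obtain ⟨b, hb, rfl⟩ := h
  rw [seg_get? Z k n] at hb
  by_cases hn : n < k
  · simp [hn] at hb
    rw [chi_eq, hb]
    exact Part.mem_some _
  · simp [hn] at hb

theorem partOracle_seg_mono {Z : Set ℕ} {k k' : ℕ} (h : k ≤ k') :
    ∀ n a, a ∈ partOracle (seg Z k) n → a ∈ partOracle (seg Z k') n := by
  intro n a ha
  rw [mem_partOracle] at ha ⊢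
  obtain ⟨b, hb, rfl⟩ := ha
  rw [seg_get?] at hb
  by_cases hn : n < k
  · simp [hn] at hb
    exact ⟨b, by rw [seg_get?]; simp [lt_of_lt_of_le hn h, hb], rfl⟩
  · simp [hn] at hb

/-! ### Oracle monotonicity of evaluation -/

theorem eval_prec_pair (g : ℕ →. ℕ) (cf cg : OCode) (a m : ℕ) :
    OCode.eval g (.prec cf cg) (Nat.pair a m) =
      m.rec (OCode.eval g cf a) (fun y IH => IH.bind fun i =>
        OCode.eval g cg (Nat.pair a (Nat.pair y i))) := by
  simp [OCode.eval, Nat.unpaired]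

theorem mem_eval_rfind' {g : ℕ →. ℕ} {cf : OCode} {n a : ℕ} :
    a ∈ OCode.eval g (.rfind' cf) n ↔ ∃ y, (0 ∈ OCode.eval g cf (Nat.pair n.unpair.1 (y + n.unpair.2)) ∧
      ∀ {z}, z < y → ∃ v, v ∈ OCode.eval g cf (Nat.pair n.unpair.1 (z + n.unpair.2)) ∧ ¬ v = 0) ∧
      y + n.unpair.2 = a := by
  constructor
  · intro h
    obtain ⟨y, hy, rfl⟩ := (Part.mem_map_iff _).1 h
    obtain ⟨h1, h2⟩ := Nat.mem_rfind.1 hy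
    refine ⟨y, ⟨?_, fun {z} hz => ?_⟩, rfl⟩
    · obtain ⟨v, hv, hv0⟩ := (Part.mem_map_iff _).1 h1
      simp at hv0
      exact hv0 ▸ hv
    · obtain ⟨v, hv, hv0⟩ := (Part.mem_map_iff _).1 (h2 hz)
      exact ⟨v, hv, by simpa using hv0⟩
  · rintro ⟨y, ⟨h1, h2⟩, rfl⟩
    refine (Part.mem_map_iff _).2 ⟨y, Nat.mem_rfind.2 ⟨(Part.mem_map_iff _).2 ⟨0, h1, by simp⟩, fun {z} hz => ?_⟩, rfl⟩
    obtain ⟨v, hv, hv0⟩ := h2 hz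
    exact (Part.mem_map_iff _).2 ⟨v, hv, by simpa using hv0⟩

theorem evalO_mono {g g' : ℕ →. ℕ} (H : ∀ n a, a ∈ g n → a ∈ g' n) :
    ∀ (c : OCode) (n a), a ∈ OCode.eval g c n → a ∈ OCode.eval g' c n := by
  intro c
  induction c with
  | zero => intro n a h; exact h
  | succ => intro n a h; exact h
  | left => intro n a h; exact h
  | right => intro n a h; exact h
  | oracle => exact H
  | pair cf cg ih1 ih2 =>
      intro n a h
      simp [OCode.eval, Seq.seq] at h ⊢
      obtain ⟨x, hx, y, hy, rfl⟩ := h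
      exact ⟨x, ih1 _ _ hx, y, ih2 _ _ hy, rfl⟩
  | comp cf cg ih1 ih2 =>
      intro n a h
      obtain ⟨x, hx, ha⟩ := (Part.mem_bind_iff (f := OCode.eval g cg n) (g := OCode.eval g cf)).1 h
      exact (Part.mem_bind_iff (f := OCode.eval g' cg n) (g := OCode.eval g' cf)).2 ⟨x, ih2 _ _ hx, ih1 _ _ ha⟩
  | prec cf cg ih1 ih2 =>
      intro n a
      have hn : n = Nat.pair n.unpair.1 n.unpair.2 := (Nat.pair_unpair n).symm
      rw [hn, eval_prec_pair, eval_prec_pair]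
      generalize n.unpair.1 = p
      induction n.unpair.2 generalizing a with
      | zero => exact ih1 _ _
      | succ m ihm =>
          intro h
          simp only [Part.mem_bind_iff] at h ⊢
          obtain ⟨i, hi, ha⟩ := h
          exact ⟨i, ihm _ hi, ih2 _ _ ha⟩
  | rfind' cf ih =>
      intro n a h
      simp only [mem_eval_rfind'] at h ⊢
      obtain ⟨y, ⟨hy, hlt⟩, rfl⟩ := h
      refine ⟨y, ⟨ih _ _ hy, fun {z} hz => ?_⟩, rfl⟩
      obtain ⟨v, hv, hd⟩ := hlt hz
      exact ⟨v, ih _ _ hv, hd⟩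

/-! ### Compactness / use principle -/

theorem exists_bound {P : ℕ → ℕ → Prop}
    (mono : ∀ z k k', k ≤ k' → P z k → P z k') :
    ∀ y, (∀ z, z ≤ y → ∃ k, P z k) → ∃ k, ∀ z, z ≤ y → P z k := by
  intro y
  induction y with
  | zero =>
      intro h
      obtain ⟨k, hk⟩ := h 0 le_rfl
      exact ⟨k, fun z hz => by rw [Nat.le_zero.1 hz]; exact hk⟩
  | succ m ih =>
      intro h
      obtain ⟨k₁, hk₁⟩ := ih (fun z hz => h z (le_trans hz (Nat.le_succ m)))
      obtain ⟨k₂, hk₂⟩ := h (m + 1) le_rfl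
      refine ⟨max k₁ k₂, fun z hz => ?_⟩
      rcases Nat.lt_or_ge z (m + 1) with h' | h'
      · exact mono _ _ _ (le_max_left _ _) (hk₁ z (Nat.lt_succ_iff.1 h'))
      · have : z = m + 1 := le_antisymm hz h'
        rw [this]
        exact mono _ _ _ (le_max_right _ _) hk₂

theorem evalO_compact {Z : Set ℕ} :
    ∀ (c : OCode) (n a), a ∈ OCode.eval (chi Z) c n →
      ∃ k, a ∈ OCode.eval (partOracle (seg Z k)) c n := by
  intro c
  induction c with
  | zero => intro n a h; exact ⟨0, h⟩
  | succ => intro n a h; exact ⟨0, h⟩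
  | left => intro n a h; exact ⟨0, h⟩
  | right => intro n a h; exact ⟨0, h⟩
  | oracle =>
      intro n a h
      have h' : a ∈ chi Z n := h
      rw [chi_eq, Part.mem_some_iff] at h'
      refine ⟨n + 1, ?_⟩
      show a ∈ partOracle (seg Z (n + 1)) n
      rw [mem_partOracle]
      exact ⟨chib Z n, by rw [seg_get?]; simp, h'.symm⟩
  | pair cf cg ih1 ih2 =>
      intro n a h
      simp [OCode.eval, Seq.seq] at h ⊢
      obtain ⟨x, hx, y, hy, rfl⟩ := h
      obtain ⟨k₁, h₁⟩ := ih1 _ _ hx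
      obtain ⟨k₂, h₂⟩ := ih2 _ _ hy
      exact ⟨max k₁ k₂, x,
        evalO_mono (partOracle_seg_mono (le_max_left _ _)) _ _ _ h₁, y,
        evalO_mono (partOracle_seg_mono (le_max_right _ _)) _ _ _ h₂, rfl⟩
  | comp cf cg ih1 ih2 =>
      intro n a h
      obtain ⟨x, hx, ha⟩ := (Part.mem_bind_iff (f := OCode.eval (chi Z) cg n) (g := OCode.eval (chi Z) cf)).1 h
      obtain ⟨k₁, h₁⟩ := ih2 _ _ hx
      obtain ⟨k₂, h₂⟩ := ih1 _ _ ha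
      exact ⟨max k₁ k₂, (Part.mem_bind_iff (f := OCode.eval (partOracle (seg Z (max k₁ k₂))) cg n)
        (g := OCode.eval (partOracle (seg Z (max k₁ k₂))) cf)).2 ⟨x,
        evalO_mono (partOracle_seg_mono (le_max_left _ _)) _ _ _ h₁,
        evalO_mono (partOracle_seg_mono (le_max_right _ _)) _ _ _ h₂⟩⟩
  | prec cf cg ih1 ih2 =>
      intro n a
      have hn : n = Nat.pair n.unpair.1 n.unpair.2 := (Nat.pair_unpair n).symm
      rw [hn]
      generalize n.unpair.1 = p
      induction n.unpair.2 generalizing a with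
      | zero =>
          intro h
          rw [eval_prec_pair] at h
          obtain ⟨k, hk⟩ := ih1 _ _ h
          exact ⟨k, by rw [eval_prec_pair]; exact hk⟩
      | succ m ihm =>
          intro h
          rw [eval_prec_pair] at h
          simp only [Part.mem_bind_iff] at h
          obtain ⟨i, hi, ha⟩ := h
          rw [← eval_prec_pair] at hi
          obtain ⟨k₁, h₁⟩ := ihm _ hi
          obtain ⟨k₂, h₂⟩ := ih2 _ _ ha
          refine ⟨max k₁ k₂, ?_⟩
          rw [eval_prec_pair]
          simp only [Part.mem_bind_iff]
          refine ⟨i, ?_, evalO_mono (partOracle_seg_mono (le_max_right _ _)) _ _ _ h₂⟩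
          have := evalO_mono (partOracle_seg_mono (le_max_left k₁ k₂)) _ _ _ h₁
          rw [eval_prec_pair] at this
          exact this
  | rfind' cf ih =>
      intro n a h
      simp only [mem_eval_rfind'] at h ⊢
      obtain ⟨y, ⟨hy, hlt⟩, rfl⟩ := h
      have key : ∀ z, z ≤ y → ∃ k, ∃ v,
          v ∈ OCode.eval (partOracle (seg Z k)) cf
            (Nat.pair n.unpair.1 (z + n.unpair.2)) ∧ (v = 0 ↔ z = y) := by
        intro z hz
        rcases Nat.lt_or_ge z y with h' | h'
        · obtain ⟨v, hv, hv0⟩ := hlt h'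
          obtain ⟨k, hk⟩ := ih _ _ hv
          exact ⟨k, v, hk, by constructor <;> intro hh <;> [exact absurd hh hv0; omega]⟩
        · have : z = y := le_antisymm hz h'
          subst this
          obtain ⟨k, hk⟩ := ih _ _ hy
          exact ⟨k, 0, hk, by simp⟩
      obtain ⟨k, hk⟩ := exists_bound (P := fun z k => ∃ v,
          v ∈ OCode.eval (partOracle (seg Z k)) cf
            (Nat.pair n.unpair.1 (z + n.unpair.2)) ∧ (v = 0 ↔ z = y))
        (fun z k k' hkk ⟨v, hv, hv0⟩ =>
          ⟨v, evalO_mono (partOracle_seg_mono hkk) _ _ _ hv, hv0⟩) y key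
      refine ⟨k, y, ⟨?_, fun {z} hz => ?_⟩, rfl⟩
      · obtain ⟨v, hv, hv0⟩ := hk y le_rfl
        have : v = 0 := hv0.2 rfl
        rw [this] at hv
        exact hv
      · obtain ⟨v, hv, hv0⟩ := hk z (le_of_lt hz)
        exact ⟨v, hv, fun h0 => absurd (hv0.1 h0) (Nat.ne_of_lt hz)⟩

/-! ### Translation into `Nat.Partrec.Code` -/

def FOr : ℕ →. ℕ :=
  fun x => ((Encodable.decode (α := List Bool) x.unpair.1).bind fun σ =>
    (σ[x.unpair.2]?).map fun b => cond b 1 0 : Option ℕ)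

theorem FOr_partrec : Nat.Partrec FOr := by
  rw [← Partrec.nat_iff]
  apply Computable.ofOption
  apply Computable.option_bind
  · exact Computable.decode.comp ((Primrec.fst.comp Primrec.unpair).to_comp)
  · apply Computable.option_map
    · exact (Primrec.list_getElem?.comp Primrec.snd
        ((Primrec.snd.comp Primrec.unpair).comp Primrec.fst)).to_comp
    · exact ((Primrec.cond Primrec.snd (Primrec.const 1) (Primrec.const 0)).to_comp).to₂

noncomputable def orCode : Nat.Partrec.Code :=
  (Nat.Partrec.Code.exists_code.1 FOr_partrec).choose

theorem orCode_eval : Nat.Partrec.Code.eval orCode = FOr :=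
  (Nat.Partrec.Code.exists_code.1 FOr_partrec).choose_spec

noncomputable def oracleCode (σ : List Bool) : Nat.Partrec.Code :=
  orCode.curry (Encodable.encode σ)

theorem oracleCode_eval (σ : List Bool) (n : ℕ) :
    Nat.Partrec.Code.eval (oracleCode σ) n = partOracle σ n := by
  rw [oracleCode, Nat.Partrec.Code.eval_curry, orCode_eval]
  simp [FOr, partOracle, Encodable.encodek]

theorem oracleCode_prim : Primrec oracleCode :=
  Nat.Partrec.Code.primrec₂_curry.comp (Primrec.const orCode) Primrec.encode

/-- Translation of an `OCode` into an ordinary code, with the oracle replaced by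
the partial lookup of the finite string `σ`. -/
noncomputable def trO (σ : List Bool) : OCode → Nat.Partrec.Code
  | .zero => Nat.Partrec.Code.zero
  | .succ => Nat.Partrec.Code.succ
  | .left => Nat.Partrec.Code.left
  | .right => Nat.Partrec.Code.right
  | .oracle => oracleCode σ
  | .pair cf cg => Nat.Partrec.Code.pair (trO σ cf) (trO σ cg)
  | .comp cf cg => Nat.Partrec.Code.comp (trO σ cf) (trO σ cg)
  | .prec cf cg => Nat.Partrec.Code.prec (trO σ cf) (trO σ cg)
  | .rfind' cf => Nat.Partrec.Code.rfind' (trO σ cf)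

theorem eval_trO (σ : List Bool) : ∀ c : OCode,
    Nat.Partrec.Code.eval (trO σ c) = OCode.eval (partOracle σ) c := by
  intro c
  induction c with
  | zero => rfl
  | succ => rfl
  | left => rfl
  | right => rfl
  | oracle => funext n; exact oracleCode_eval σ n
  | pair cf cg ih1 ih2 => funext n; simp [trO, Nat.Partrec.Code.eval, OCode.eval, ih1, ih2]
  | comp cf cg ih1 ih2 => funext n; simp [trO, Nat.Partrec.Code.eval, OCode.eval, ih1, ih2]
  | prec cf cg ih1 ih2 => funext n; simp [trO, Nat.Partrec.Code.eval, OCode.eval, ih1, ih2]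
  | rfind' cf ih => funext n; simp [trO, Nat.Partrec.Code.eval, OCode.eval, ih]

/-! ### Computability of the translation -/

noncomputable def trF (σ : List Bool) (a : ℕ) : Nat.Partrec.Code :=
  trO σ (OCode.ofNat a)

noncomputable def trG (σ : List Bool) (l : List Nat.Partrec.Code) :
    Option Nat.Partrec.Code :=
  if l.length = 0 then some Nat.Partrec.Code.zero
  else if l.length = 1 then some Nat.Partrec.Code.succ
  else if l.length = 2 then some Nat.Partrec.Code.left
  else if l.length = 3 then some Nat.Partrec.Code.right
  else if l.length = 4 then some (oracleCode σ)
  else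
    let k := l.length - 5
    let m := k / 4
    if k % 2 = 1 then
      if k / 2 % 2 = 1 then (l[m]?).map Nat.Partrec.Code.rfind'
      else (l[m.unpair.1]?).bind fun x => (l[m.unpair.2]?).map fun y =>
        Nat.Partrec.Code.prec x y
    else
      if k / 2 % 2 = 1 then (l[m.unpair.1]?).bind fun x => (l[m.unpair.2]?).map fun y =>
        Nat.Partrec.Code.comp x y
      else (l[m.unpair.1]?).bind fun x => (l[m.unpair.2]?).map fun y =>
        Nat.Partrec.Code.pair x y

theorem lget {α : Type*} (f : ℕ → α) {i n : ℕ} (h : i < n) :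
    ((List.range n).map f)[i]? = some (f i) := by
  simp [h]

theorem trG_spec (σ : List Bool) (n : ℕ) :
    trG σ ((List.range n).map (trF σ)) = some (trF σ n) := by
  match n with
  | 0 => simp [trG, trF, OCode.ofNat, trO]
  | 1 => simp [trG, trF, OCode.ofNat, trO]
  | 2 => simp [trG, trF, OCode.ofNat, trO]
  | 3 => simp [trG, trF, OCode.ofNat, trO]
  | 4 => simp [trG, trF, OCode.ofNat, trO]
  | (k+5) =>
    have hlen : ((List.range (k+5)).map (trF σ)).length = k + 5 := by simp
    have hm : k / 4 < k + 5 := by omega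
    have hm1 : (k / 4).unpair.1 < k + 5 := lt_of_le_of_lt (Nat.unpair_left_le _) hm
    have hm2 : (k / 4).unpair.2 < k + 5 := lt_of_le_of_lt (Nat.unpair_right_le _) hm
    have hofNat : OCode.ofNat (k + 5) =
        (match k.bodd, k.div2.bodd with
        | false, false => OCode.pair (OCode.ofNat (k.div2.div2).unpair.1)
            (OCode.ofNat (k.div2.div2).unpair.2)
        | false, true  => OCode.comp (OCode.ofNat (k.div2.div2).unpair.1)
            (OCode.ofNat (k.div2.div2).unpair.2)
        | true , false => OCode.prec (OCode.ofNat (k.div2.div2).unpair.1)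
            (OCode.ofNat (k.div2.div2).unpair.2)
        | true , true  => OCode.rfind' (OCode.ofNat (k.div2.div2)) : OCode) := by
      rw [OCode.ofNat]
    have hb1 : k.bodd = decide (k % 2 = 1) := bodd_mod2 k
    have hb2 : k.div2.bodd = decide (k / 2 % 2 = 1) := by
      rw [Nat.div2_val, bodd_mod2]
    have hdd : k.div2.div2 = k / 4 := by rw [Nat.div2_val, Nat.div2_val]; omega
    rw [trG]
    simp only [hlen]
    norm_num
    by_cases h1 : k % 2 = 1 <;> by_cases h2 : k / 2 % 2 = 1 <;>
      simp only [h1, h2, if_pos, if_neg, lget _ hm, lget _ hm1, lget _ hm2,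
        Option.bind_some, Option.map_some, if_true, if_false] <;>
      [skip; skip; skip; skip] <;>
      · rw [trF, hofNat, hb1, hb2, hdd]
        simp [h1, h2, trO, trF, List.getElem?_range, hm, hm1, hm2]

theorem combine_prim {α : Type*} [Primcodable α]
    (F : Nat.Partrec.Code → Nat.Partrec.Code → Nat.Partrec.Code) (hF : Primrec₂ F)
    {l : α → List Nat.Partrec.Code} {i j : α → ℕ}
    (hl : Primrec l) (hi : Primrec i) (hj : Primrec j) :
    Primrec fun a => ((l a)[(i a)]?).bind fun x => ((l a)[(j a)]?).map fun y => F x y := by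
  apply Primrec.option_bind (Primrec.list_getElem?.comp hl hi)
  apply Primrec.option_map ((Primrec.list_getElem?.comp hl hj).comp Primrec.fst)
  exact hF.comp (Primrec.snd.comp Primrec.fst) Primrec.snd

theorem trG_prim : Primrec₂ trG := by
  have hlen : Primrec fun p : List Bool × List Nat.Partrec.Code => p.2.length :=
    Primrec.list_length.comp Primrec.snd
  have hk : Primrec fun p : List Bool × List Nat.Partrec.Code => p.2.length - 5 :=
    Primrec.nat_sub.comp hlen (Primrec.const 5)
  have hm : Primrec fun p : List Bool × List Nat.Partrec.Code => (p.2.length - 5) / 4 :=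
    Primrec.nat_div.comp hk (Primrec.const 4)
  have hm1 : Primrec fun p : List Bool × List Nat.Partrec.Code =>
      ((p.2.length - 5) / 4).unpair.1 :=
    Primrec.fst.comp (Primrec.unpair.comp hm)
  have hm2 : Primrec fun p : List Bool × List Nat.Partrec.Code =>
      ((p.2.length - 5) / 4).unpair.2 :=
    Primrec.snd.comp (Primrec.unpair.comp hm)
  have heq : ∀ c : ℕ, PrimrecPred fun p : List Bool × List Nat.Partrec.Code =>
      p.2.length = c := fun c => Primrec.eq.comp hlen (Primrec.const c)
  have hodd1 : PrimrecPred fun p : List Bool × List Nat.Partrec.Code =>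
      (p.2.length - 5) % 2 = 1 :=
    Primrec.eq.comp (Primrec.nat_mod.comp hk (Primrec.const 2)) (Primrec.const 1)
  have hodd2 : PrimrecPred fun p : List Bool × List Nat.Partrec.Code =>
      (p.2.length - 5) / 2 % 2 = 1 :=
    Primrec.eq.comp (Primrec.nat_mod.comp
      (Primrec.nat_div.comp hk (Primrec.const 2)) (Primrec.const 2)) (Primrec.const 1)
  have hrf : Primrec fun p : List Bool × List Nat.Partrec.Code =>
      (p.2[((p.2.length - 5) / 4)]?).map Nat.Partrec.Code.rfind' :=
    Primrec.option_map (Primrec.list_getElem?.comp Primrec.snd hm)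
      ((Nat.Partrec.Code.primrec_rfind'.comp Primrec.snd).to₂)
  have hpair : Primrec fun p : List Bool × List Nat.Partrec.Code =>
      (p.2[((p.2.length - 5) / 4).unpair.1]?).bind fun x =>
        (p.2[((p.2.length - 5) / 4).unpair.2]?).map fun y => Nat.Partrec.Code.pair x y :=
    combine_prim _ Nat.Partrec.Code.primrec₂_pair Primrec.snd hm1 hm2
  have hcomp : Primrec fun p : List Bool × List Nat.Partrec.Code =>
      (p.2[((p.2.length - 5) / 4).unpair.1]?).bind fun x =>
        (p.2[((p.2.length - 5) / 4).unpair.2]?).map fun y => Nat.Partrec.Code.comp x y :=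
    combine_prim _ Nat.Partrec.Code.primrec₂_comp Primrec.snd hm1 hm2
  have hprec : Primrec fun p : List Bool × List Nat.Partrec.Code =>
      (p.2[((p.2.length - 5) / 4).unpair.1]?).bind fun x =>
        (p.2[((p.2.length - 5) / 4).unpair.2]?).map fun y => Nat.Partrec.Code.prec x y :=
    combine_prim _ Nat.Partrec.Code.primrec₂_prec Primrec.snd hm1 hm2
  have main : Primrec fun p : List Bool × List Nat.Partrec.Code => trG p.1 p.2 := by
    have hbody : (fun p : List Bool × List Nat.Partrec.Code => trG p.1 p.2) =
        fun p =>
          if p.2.length = 0 then some Nat.Partrec.Code.zero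
          else if p.2.length = 1 then some Nat.Partrec.Code.succ
          else if p.2.length = 2 then some Nat.Partrec.Code.left
          else if p.2.length = 3 then some Nat.Partrec.Code.right
          else if p.2.length = 4 then some (oracleCode p.1)
          else if (p.2.length - 5) % 2 = 1 then
            if (p.2.length - 5) / 2 % 2 = 1 then
              (p.2[((p.2.length - 5) / 4)]?).map Nat.Partrec.Code.rfind'
            else (p.2[((p.2.length - 5) / 4).unpair.1]?).bind fun x =>
              (p.2[((p.2.length - 5) / 4).unpair.2]?).map fun y => Nat.Partrec.Code.prec x y
          else if (p.2.length - 5) / 2 % 2 = 1 then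
            (p.2[((p.2.length - 5) / 4).unpair.1]?).bind fun x =>
              (p.2[((p.2.length - 5) / 4).unpair.2]?).map fun y => Nat.Partrec.Code.comp x y
          else (p.2[((p.2.length - 5) / 4).unpair.1]?).bind fun x =>
              (p.2[((p.2.length - 5) / 4).unpair.2]?).map fun y => Nat.Partrec.Code.pair x y := by
      funext p
      rfl
    rw [hbody]
    exact Primrec.ite (heq 0) (Primrec.const _) <| Primrec.ite (heq 1) (Primrec.const _) <|
      Primrec.ite (heq 2) (Primrec.const _) <| Primrec.ite (heq 3) (Primrec.const _) <|
      Primrec.ite (heq 4) (Primrec.option_some.comp (oracleCode_prim.comp Primrec.fst)) <|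
      Primrec.ite hodd1 (Primrec.ite hodd2 hrf hprec) (Primrec.ite hodd2 hcomp hpair)
  exact main

theorem trF_prim : Primrec₂ trF :=
  Primrec.nat_strong_rec trF trG_prim trG_spec

/-! ### Approximations of the c.e. sets -/

def WsB (e s n : ℕ) : Bool :=
  (Nat.Partrec.Code.evaln s (Denumerable.ofNat Nat.Partrec.Code e) n).isSome

theorem WsB_mono {e s s' n : ℕ} (h : s ≤ s') (hw : WsB e s n = true) :
    WsB e s' n = true := by
  rw [WsB, Option.isSome_iff_exists] at hw ⊢
  obtain ⟨x, hx⟩ := hw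
  exact ⟨x, Nat.Partrec.Code.evaln_mono h hx⟩

theorem WsB_sound {e s n : ℕ} (hw : WsB e s n = true) : n ∈ WSet e := by
  rw [WsB, Option.isSome_iff_exists] at hw
  obtain ⟨x, hx⟩ := hw
  have := Nat.Partrec.Code.evaln_sound (k := s) (x := x) hx
  exact Part.dom_iff_mem.2 ⟨x, this⟩

theorem WsB_complete {e n : ℕ} : n ∈ WSet e ↔ ∃ s, WsB e s n = true := by
  constructor
  · intro h
    obtain ⟨x, hx⟩ := Part.dom_iff_mem.1 h
    obtain ⟨s, hs⟩ := Nat.Partrec.Code.evaln_complete.1 hx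
    exact ⟨s, by rw [WsB, Option.isSome_iff_exists]; exact ⟨x, hs⟩⟩
  · rintro ⟨s, hs⟩
    exact WsB_sound hs

def tauL (e s k : ℕ) : List Bool := (List.range k).map (WsB e s)

/-- Stability of the `W_e` approximation below `k` at stage `s`. -/
def stab (e s k : ℕ) : Prop := ∀ t i, i < k → WsB e t i = true → WsB e s i = true

theorem stab_mono {e s s' k : ℕ} (h : s ≤ s') (hst : stab e s k) : stab e s' k :=
  fun t i hi hw => WsB_mono h (hst t i hi hw)

theorem stab_WsB {e s k : ℕ} (hst : stab e s k) {i : ℕ} (hi : i < k) :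
    WsB e s i = chib (WSet e) i := by
  by_cases h : i ∈ WSet e
  · obtain ⟨t, ht⟩ := WsB_complete.1 h
    rw [hst t i hi ht, chib, decide_eq_true h]
  · rw [chib, decide_eq_false h]
    by_contra hh
    rw [Bool.not_eq_false] at hh
    exact h (WsB_sound hh)

theorem stab_tau {e s k : ℕ} (hst : stab e s k) : tauL e s k = seg (WSet e) k := by
  rw [tauL, seg]
  apply List.map_congr_left
  intro i hi
  exact stab_WsB hst (List.mem_range.1 hi)

theorem stab_exists (e k : ℕ) : ∃ s₀, ∀ s, s₀ ≤ s → stab e s k := by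
  rcases Nat.eq_zero_or_pos k with rfl | hk
  · exact ⟨0, fun s _ t i hi => absurd hi (Nat.not_lt_zero i)⟩
  have key : ∀ i, i ≤ k - 1 → ∃ s₀, ∀ t, WsB e t i = true → WsB e s₀ i = true := by
    intro i _
    by_cases h : i ∈ WSet e
    · obtain ⟨s₀, hs₀⟩ := WsB_complete.1 h
      exact ⟨s₀, fun t _ => hs₀⟩
    · exact ⟨0, fun t ht => absurd (WsB_sound ht) h⟩
  obtain ⟨s₀, hs₀⟩ := exists_bound
    (P := fun i s₀ => ∀ t, WsB e t i = true → WsB e s₀ i = true)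
    (fun i s s' hss h t ht => WsB_mono hss (h t ht)) (k - 1) key
  refine ⟨s₀, fun s hs t i hi hw => WsB_mono hs (hs₀ i (by omega) t hw)⟩

/-! ### The arithmetized matrix -/

noncomputable def zb (e s k ci m : ℕ) : Option ℕ :=
  Nat.Partrec.Code.evaln s (trF (tauL e s k) ci) m

noncomputable def zetaL (e s k ci n : ℕ) : List Bool :=
  (List.range n).map fun m => decide (zb e s k ci m = some 1)

theorem zb_sound {e s k ci m v : ℕ} (hst : stab e s k) (h : zb e s k ci m = some v) :
    v ∈ OCode.eval (chi (WSet e)) (OCode.ofNat ci) m := by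
  have h1 : v ∈ Nat.Partrec.Code.eval (trF (tauL e s k) ci) m :=
    Nat.Partrec.Code.evaln_sound h
  rw [stab_tau hst, trF, eval_trO] at h1
  exact evalO_mono (fun n a => partOracle_le_chi) _ _ _ h1

theorem evaln_seg_sound {Z : Set ℕ} {s k di n w : ℕ}
    (h : Nat.Partrec.Code.evaln s (trF (seg Z k) di) n = some w) :
    w ∈ OCode.eval (chi Z) (OCode.ofNat di) n := by
  have h1 : w ∈ Nat.Partrec.Code.eval (trF (seg Z k) di) n :=
    Nat.Partrec.Code.evaln_sound h
  rw [trF, eval_trO] at h1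
  exact evalO_mono (fun n a => partOracle_le_chi) _ _ _ h1

theorem eval_seg_complete {Z : Set ℕ} {c : OCode} {n v : ℕ}
    (h : v ∈ OCode.eval (chi Z) c n) :
    ∃ k₀, ∀ k, k₀ ≤ k → v ∈ Nat.Partrec.Code.eval (trF (seg Z k) (encodeO c)) n := by
  obtain ⟨k₀, hk₀⟩ := evalO_compact c n v h
  refine ⟨k₀, fun k hk => ?_⟩
  rw [trF, ofNat_encodeO, eval_trO]
  exact evalO_mono (partOracle_seg_mono hk) _ _ _ hk₀

def allB (l : List Bool) : Bool := l.foldr (· && ·) true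

theorem allB_iff (l : List Bool) : allB l = true ↔ ∀ b ∈ l, b = true := by
  induction l with
  | nil => simp [allB]
  | cons b l ih => simp [allB, List.foldr] at ih ⊢; intro _; exact ih

def ballB (k : ℕ) (f : ℕ → Bool) : Bool := allB ((List.range k).map f)

theorem ballB_iff (k : ℕ) (f : ℕ → Bool) : ballB k f = true ↔ ∀ i < k, f i = true := by
  rw [ballB, allB_iff]
  simp

/-- The computable Σ⁰₄ matrix. -/
noncomputable def RMat (T : List Bool → Bool) (x : ℕ × ℕ × ℕ × ℕ × ℕ) : Bool :=
  let e := x.1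
  let ci := x.2.1.unpair.1
  let di := x.2.1.unpair.2
  let n := x.2.2.1
  let q := x.2.2.2.1
  let t := x.2.2.2.2
  let s := q.unpair.1
  let k := q.unpair.2.unpair.1
  let k2 := q.unpair.2.unpair.2.unpair.1
  let w := q.unpair.2.unpair.2.unpair.2
  ballB k (fun i => !(WsB e t i) || WsB e s i) &&
  ballB (n + 1) (fun m => decide (zb e s k ci m = some 0) || decide (zb e s k ci m = some 1)) &&
  T (zetaL e s k ci n) &&
  ballB k2 (fun i => decide (zb e s k ci i = some 0) || decide (zb e s k ci i = some 1)) &&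
  decide (Nat.Partrec.Code.evaln s (trF (zetaL e s k ci k2) di) n = some w) &&
  (if w = 1 then WsB e s n else decide (w = 0) && !(WsB e t n))

/-! ### Computability of the matrix -/

theorem allB_prim : Primrec allB := by
  have h : Primrec fun q : List Bool × (Bool × Bool) =>
      bif q.2.1 then q.2.2 else false :=
    Primrec.cond (Primrec.fst.comp Primrec.snd) (Primrec.snd.comp Primrec.snd)
      (Primrec.const false)
  have h2 : Primrec₂ fun (_ : List Bool) (p : Bool × Bool) => p.1 && p.2 := by
    refine h.of_eq ?_
    rintro ⟨l, b1, b2⟩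
    cases b1 <;> rfl
  exact (Primrec.list_foldr Primrec.id (Primrec.const true) h2).of_eq fun l => rfl

theorem andB_comp {α : Type*} [Primcodable α] {f g : α → Bool}
    (hf : Computable f) (hg : Computable g) : Computable fun x => f x && g x := by
  have h : Computable fun x => bif f x then g x else false :=
    Computable.cond hf hg (Computable.const false)
  refine h.of_eq ?_
  intro x
  cases hfx : f x <;> rfl

theorem WsB_primgen {β : Type} [Primcodable β] {fe fs fn : β → ℕ}
    (hfe : Primrec fe) (hfs : Primrec fs) (hfn : Primrec fn) :
    Primrec fun b => WsB (fe b) (fs b) (fn b) :=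
  Primrec.option_isSome.comp (Nat.Partrec.Code.primrec_evaln.comp
    (Primrec.pair (Primrec.pair hfs
      ((Primrec.ofNat Nat.Partrec.Code).comp hfe)) hfn))

theorem tauL_primgen {β : Type} [Primcodable β] {fe fs fk : β → ℕ}
    (hfe : Primrec fe) (hfs : Primrec fs) (hfk : Primrec fk) :
    Primrec fun b => tauL (fe b) (fs b) (fk b) :=
  Primrec.list_map (Primrec.list_range.comp hfk)
    ((WsB_primgen (hfe.comp Primrec.fst) (hfs.comp Primrec.fst) Primrec.snd).to₂)

theorem zb_primgen {β : Type} [Primcodable β] {fe fs fk fc fm : β → ℕ}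
    (hfe : Primrec fe) (hfs : Primrec fs) (hfk : Primrec fk)
    (hfc : Primrec fc) (hfm : Primrec fm) :
    Primrec fun b => zb (fe b) (fs b) (fk b) (fc b) (fm b) :=
  Nat.Partrec.Code.primrec_evaln.comp
    (Primrec.pair (Primrec.pair hfs
      (trF_prim.comp (tauL_primgen hfe hfs hfk) hfc)) hfm)

theorem zetaL_primgen {β : Type} [Primcodable β] {fe fs fk fc fn : β → ℕ}
    (hfe : Primrec fe) (hfs : Primrec fs) (hfk : Primrec fk)
    (hfc : Primrec fc) (hfn : Primrec fn) :
    Primrec fun b => zetaL (fe b) (fs b) (fk b) (fc b) (fn b) := by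
  apply Primrec.list_map (Primrec.list_range.comp hfn)
  exact (PrimrecPred.decide (Primrec.eq.comp (zb_primgen (hfe.comp Primrec.fst) (hfs.comp Primrec.fst)
    (hfk.comp Primrec.fst) (hfc.comp Primrec.fst) Primrec.snd)
    (Primrec.const (some 1)))).to₂

theorem RMat_computable {T : List Bool → Bool} (hT : Computable T) :
    Computable (RMat T) := by
  have he : Primrec fun x : ℕ × ℕ × ℕ × ℕ × ℕ => x.1 := Primrec.fst
  have ha : Primrec fun x : ℕ × ℕ × ℕ × ℕ × ℕ => x.2.1 :=
    Primrec.fst.comp Primrec.snd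
  have hn : Primrec fun x : ℕ × ℕ × ℕ × ℕ × ℕ => x.2.2.1 :=
    Primrec.fst.comp (Primrec.snd.comp Primrec.snd)
  have hq : Primrec fun x : ℕ × ℕ × ℕ × ℕ × ℕ => x.2.2.2.1 :=
    Primrec.fst.comp (Primrec.snd.comp (Primrec.snd.comp Primrec.snd))
  have ht : Primrec fun x : ℕ × ℕ × ℕ × ℕ × ℕ => x.2.2.2.2 :=
    Primrec.snd.comp (Primrec.snd.comp (Primrec.snd.comp Primrec.snd))
  have hci : Primrec fun x : ℕ × ℕ × ℕ × ℕ × ℕ => x.2.1.unpair.1 :=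
    Primrec.fst.comp (Primrec.unpair.comp ha)
  have hdi : Primrec fun x : ℕ × ℕ × ℕ × ℕ × ℕ => x.2.1.unpair.2 :=
    Primrec.snd.comp (Primrec.unpair.comp ha)
  have hs : Primrec fun x : ℕ × ℕ × ℕ × ℕ × ℕ => x.2.2.2.1.unpair.1 :=
    Primrec.fst.comp (Primrec.unpair.comp hq)
  have hq2 : Primrec fun x : ℕ × ℕ × ℕ × ℕ × ℕ => x.2.2.2.1.unpair.2 :=
    Primrec.snd.comp (Primrec.unpair.comp hq)
  have hk : Primrec fun x : ℕ × ℕ × ℕ × ℕ × ℕ => x.2.2.2.1.unpair.2.unpair.1 :=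
    Primrec.fst.comp (Primrec.unpair.comp hq2)
  have hq3 : Primrec fun x : ℕ × ℕ × ℕ × ℕ × ℕ => x.2.2.2.1.unpair.2.unpair.2 :=
    Primrec.snd.comp (Primrec.unpair.comp hq2)
  have hk2 : Primrec fun x : ℕ × ℕ × ℕ × ℕ × ℕ =>
      x.2.2.2.1.unpair.2.unpair.2.unpair.1 :=
    Primrec.fst.comp (Primrec.unpair.comp hq3)
  have hw : Primrec fun x : ℕ × ℕ × ℕ × ℕ × ℕ =>
      x.2.2.2.1.unpair.2.unpair.2.unpair.2 :=
    Primrec.snd.comp (Primrec.unpair.comp hq3)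
  -- helpers
  have ballB_primgen : ∀ {fk : (ℕ × ℕ × ℕ × ℕ × ℕ) → ℕ}
      {f : (ℕ × ℕ × ℕ × ℕ × ℕ) → ℕ → Bool}, Primrec fk → Primrec₂ f →
      Primrec fun x => ballB (fk x) (f x) := by
    intro fk f hfk hf
    exact allB_prim.comp (Primrec.list_map (Primrec.list_range.comp hfk) hf)
  have horb : ∀ {f g : ((ℕ × ℕ × ℕ × ℕ × ℕ) × ℕ) → Bool}, Primrec f → Primrec g →
      Primrec fun p => f p || g p := by
    intro f g hf hg
    refine (Primrec.cond hf (Primrec.const true) hg).of_eq ?_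
    intro p
    cases hfp : f p <;> rfl
  have hinz : ∀ {fe fs fk fc fm : ((ℕ × ℕ × ℕ × ℕ × ℕ) × ℕ) → ℕ}, Primrec fe →
      Primrec fs → Primrec fk → Primrec fc → Primrec fm → (v : ℕ) →
      Primrec fun p => decide (zb (fe p) (fs p) (fk p) (fc p) (fm p) = some v) := by
    intro fe fs fk fc fm hfe hfs hfk hfc hfm v
    exact PrimrecPred.decide (Primrec.eq.comp (zb_primgen hfe hfs hfk hfc hfm) (Primrec.const (some v)))
  -- clause 1 : stability
  have hc1 : Primrec fun x : ℕ × ℕ × ℕ × ℕ × ℕ =>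
      ballB x.2.2.2.1.unpair.2.unpair.1
        (fun i => !(WsB x.1 x.2.2.2.2 i) || WsB x.1 x.2.2.2.1.unpair.1 i) := by
    apply ballB_primgen hk
    exact (horb ((Primrec.not).comp
        (WsB_primgen (he.comp Primrec.fst) (ht.comp Primrec.fst) Primrec.snd))
      (WsB_primgen (he.comp Primrec.fst) (hs.comp Primrec.fst) Primrec.snd)).to₂
  -- clauses 2 and 4 : totality with values in {0,1}
  have hc24 : ∀ {fk : (ℕ × ℕ × ℕ × ℕ × ℕ) → ℕ}, Primrec fk →
      Primrec fun x : ℕ × ℕ × ℕ × ℕ × ℕ => ballB (fk x)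
        (fun m => decide (zb x.1 x.2.2.2.1.unpair.1 x.2.2.2.1.unpair.2.unpair.1
            x.2.1.unpair.1 m = some 0) ||
          decide (zb x.1 x.2.2.2.1.unpair.1 x.2.2.2.1.unpair.2.unpair.1
            x.2.1.unpair.1 m = some 1)) := by
    intro fk hfk
    apply ballB_primgen hfk
    exact (horb
      (hinz (he.comp Primrec.fst) (hs.comp Primrec.fst) (hk.comp Primrec.fst)
        (hci.comp Primrec.fst) Primrec.snd 0)
      (hinz (he.comp Primrec.fst) (hs.comp Primrec.fst) (hk.comp Primrec.fst)
        (hci.comp Primrec.fst) Primrec.snd 1)).to₂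
  -- clause 3 : the tree condition
  have hc3 : Computable fun x : ℕ × ℕ × ℕ × ℕ × ℕ =>
      T (zetaL x.1 x.2.2.2.1.unpair.1 x.2.2.2.1.unpair.2.unpair.1
        x.2.1.unpair.1 x.2.2.1) :=
    hT.comp (zetaL_primgen he hs hk hci hn).to_comp
  -- clause 5 : the W-computation from Z
  have hc5 : Primrec fun x : ℕ × ℕ × ℕ × ℕ × ℕ =>
      decide (Nat.Partrec.Code.evaln x.2.2.2.1.unpair.1
        (trF (zetaL x.1 x.2.2.2.1.unpair.1 x.2.2.2.1.unpair.2.unpair.1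
          x.2.1.unpair.1 x.2.2.2.1.unpair.2.unpair.2.unpair.1) x.2.1.unpair.2)
        x.2.2.1 = some x.2.2.2.1.unpair.2.unpair.2.unpair.2) := by
    apply PrimrecPred.decide (Primrec.eq.comp _ (Primrec.option_some.comp hw))
    exact Nat.Partrec.Code.primrec_evaln.comp (Primrec.pair (Primrec.pair hs
      (trF_prim.comp (zetaL_primgen he hs hk hci hk2) hdi)) hn)
  -- clause 6 : correctness of the answer
  have hc6 : Primrec fun x : ℕ × ℕ × ℕ × ℕ × ℕ =>
      (if x.2.2.2.1.unpair.2.unpair.2.unpair.2 = 1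
        then WsB x.1 x.2.2.2.1.unpair.1 x.2.2.1
        else decide (x.2.2.2.1.unpair.2.unpair.2.unpair.2 = 0) &&
          !(WsB x.1 x.2.2.2.2 x.2.2.1)) := by
    apply Primrec.ite (Primrec.eq.comp hw (Primrec.const 1))
      (WsB_primgen he hs hn)
    have hnot : Primrec fun x : ℕ × ℕ × ℕ × ℕ × ℕ => !(WsB x.1 x.2.2.2.2 x.2.2.1) :=
      Primrec.not.comp (WsB_primgen he ht hn)
    have hdec : Primrec fun x : ℕ × ℕ × ℕ × ℕ × ℕ =>
        decide (x.2.2.2.1.unpair.2.unpair.2.unpair.2 = 0) :=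
      PrimrecPred.decide (Primrec.eq.comp hw (Primrec.const 0))
    refine (Primrec.cond hdec hnot (Primrec.const false)).of_eq ?_
    intro x
    by_cases hh : x.2.2.2.1.unpair.2.unpair.2.unpair.2 = 0 <;> simp [hh]
  -- assembly
  have final := andB_comp (andB_comp (andB_comp (andB_comp (andB_comp
    hc1.to_comp (hc24 (Primrec.succ.comp hn)).to_comp) hc3) (hc24 hk2).to_comp) hc5.to_comp)
    hc6.to_comp
  exact final.of_eq fun x => rfl

/-! ### Forward direction -/

theorem eval_trF_seg_mono {Z : Set ℕ} {i n v k k' : ℕ} (h : k ≤ k')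
    (hv : v ∈ Nat.Partrec.Code.eval (trF (seg Z k) i) n) :
    v ∈ Nat.Partrec.Code.eval (trF (seg Z k') i) n := by
  rw [trF, eval_trO] at hv ⊢
  exact evalO_mono (partOracle_seg_mono h) _ _ _ hv

theorem main_forward {T : List Bool → Bool} {Z : Set ℕ} {e : ℕ}
    (hZT : ∀ n, T (seg Z n) = true) (cz cw : OCode)
    (hcz : ∀ m, OCode.eval (chi (WSet e)) cz m = Part.some (if m ∈ Z then 1 else 0))
    (hcw : ∀ m, OCode.eval (chi Z) cw m = Part.some (if m ∈ WSet e then 1 else 0)) :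
    ∀ n, ∃ q, ∀ t,
      RMat T (e, Nat.pair (encodeO cz) (encodeO cw), n, q, t) = true := by
  intro n
  set W := WSet e with hW
  have bitmem : ∀ m, (if m ∈ Z then 1 else 0) ∈ OCode.eval (chi W) cz m := by
    intro m; rw [hcz m]; exact Part.mem_some _
  set wv := (if n ∈ W then (1:ℕ) else 0) with hwv
  have wvmem : wv ∈ OCode.eval (chi Z) cw n := by rw [hcw n]; exact Part.mem_some _
  -- choose the use `k2` for the `cw` computation
  obtain ⟨k2, hk2⟩ := eval_seg_complete wvmem
  have hk2' : wv ∈ Nat.Partrec.Code.eval (trF (seg Z k2) (encodeO cw)) n :=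
    hk2 k2 le_rfl
  -- choose a use `k` large enough for all `cz` computations at `m ≤ max n k2`
  obtain ⟨k, hk⟩ := exists_bound
    (P := fun m k => (if m ∈ Z then (1:ℕ) else 0) ∈
      Nat.Partrec.Code.eval (trF (seg W k) (encodeO cz)) m)
    (fun m k k' hkk h => eval_trF_seg_mono hkk h) (max n k2)
    (fun m _ => by
      obtain ⟨k₀, hk₀⟩ := eval_seg_complete (bitmem m)
      exact ⟨k₀, hk₀ k₀ le_rfl⟩)
  -- choose the stage `s`
  obtain ⟨s₁, hs₁⟩ := stab_exists e k
  obtain ⟨s₂, hs₂⟩ := exists_bound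
    (P := fun m s => Nat.Partrec.Code.evaln s (trF (seg W k) (encodeO cz)) m
      = some (if m ∈ Z then 1 else 0))
    (fun m s s' hss h => Nat.Partrec.Code.evaln_mono hss h)
    (max n k2)
    (fun m hm => Nat.Partrec.Code.evaln_complete.1 (hk m hm))
  obtain ⟨s₃, hs₃⟩ := Nat.Partrec.Code.evaln_complete.1 hk2'
  obtain ⟨s₄, hs₄⟩ : ∃ s₄, (n ∈ W → WsB e s₄ n = true) := by
    by_cases h : n ∈ W
    · obtain ⟨s₄, h₄⟩ := WsB_complete.1 h
      exact ⟨s₄, fun _ => h₄⟩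
    · exact ⟨0, fun hn => absurd hn h⟩
  set s := max (max s₁ s₂) (max s₃ s₄) with hsdef
  have hss₁ : s₁ ≤ s := le_trans (le_max_left _ _) (le_max_left _ _)
  have hss₂ : s₂ ≤ s := le_trans (le_max_right _ _) (le_max_left _ _)
  have hss₃ : s₃ ≤ s := le_trans (le_max_left _ _) (le_max_right _ _)
  have hss₄ : s₄ ≤ s := le_trans (le_max_right _ _) (le_max_right _ _)
  have hstab : stab e s k := hs₁ s hss₁
  have htau : tauL e s k = seg W k := stab_tau hstab
  -- the `cz` computations converge at stage `s`
  have hzb : ∀ m, m ≤ max n k2 →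
      zb e s k (encodeO cz) m = some (if m ∈ Z then 1 else 0) := by
    intro m hm
    rw [zb, htau]
    exact Nat.Partrec.Code.evaln_mono hss₂ (hs₂ m hm)
  -- the computed bits agree with `Z`
  have hzeta : ∀ j, j ≤ max n k2 → zetaL e s k (encodeO cz) j = seg Z j := by
    intro j hj
    rw [zetaL, seg]
    apply List.map_congr_left
    intro m hm
    have hmj : m ≤ max n k2 := le_trans (le_of_lt (List.mem_range.1 hm)) hj
    rw [hzb m hmj, chib]
    by_cases hmem : m ∈ Z <;> simp [hmem]
  refine ⟨Nat.pair s (Nat.pair k (Nat.pair k2 wv)), fun t => ?_⟩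
  rw [RMat]
  simp only [Nat.unpair_pair]
  rw [Bool.and_eq_true, Bool.and_eq_true, Bool.and_eq_true, Bool.and_eq_true,
    Bool.and_eq_true]
  refine ⟨⟨⟨⟨⟨?_, ?_⟩, ?_⟩, ?_⟩, ?_⟩, ?_⟩
  · -- stability
    rw [ballB_iff]
    intro i hi
    rcases hWt : WsB e t i with hf | htt
    · simp
    · simp only [Bool.not_true, Bool.false_or]
      exact hstab t i hi hWt
  · -- totality on m ≤ n
    rw [ballB_iff]
    intro m hm
    rw [hzb m (le_trans (Nat.lt_succ_iff.1 hm) (le_max_left _ _))]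
    by_cases hmem : m ∈ Z <;> simp [hmem]
  · -- the tree condition
    rw [hzeta n (le_max_left _ _)]
    exact hZT n
  · -- totality on i < k2
    rw [ballB_iff]
    intro i hi
    rw [hzb i (le_trans (le_of_lt hi) (le_max_right _ _))]
    by_cases hmem : i ∈ Z <;> simp [hmem]
  · -- the `cw` computation
    rw [hzeta k2 (le_max_right _ _)]
    simp only [decide_eq_true_iff]
    exact Nat.Partrec.Code.evaln_mono hss₃ hs₃
  · -- correctness of the answer
    by_cases hn : n ∈ W
    · have : wv = 1 := by rw [hwv, if_pos hn]
      rw [this, if_pos rfl]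
      exact WsB_mono hss₄ (hs₄ hn)
    · have hwv0 : wv = 0 := by rw [hwv, if_neg hn]
      rw [hwv0]
      simp only [if_neg (by norm_num : (0:ℕ) ≠ 1)]
      rw [Bool.and_eq_true]
      refine ⟨by simp, ?_⟩
      rcases hWt : WsB e t n with hf | htt
      · simp
      · exact absurd (WsB_sound hWt) hn

/-! ### Backward direction -/

theorem zeta_eq_seg {e s k ci j : ℕ}
    (Z : Set ℕ)
    (hZ : ∀ m, m ∈ Z ↔ OCode.eval (chi (WSet e)) (OCode.ofNat ci) m = Part.some 1)
    (hstab : stab e s k)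
    (hbits : ∀ i < j, zb e s k ci i = some 0 ∨ zb e s k ci i = some 1) :
    zetaL e s k ci j = seg Z j := by
  rw [zetaL, seg]
  apply List.map_congr_left
  intro m hm
  have hmj := List.mem_range.1 hm
  rcases hbits m hmj with h | h
  · have hev : OCode.eval (chi (WSet e)) (OCode.ofNat ci) m = Part.some 0 :=
      Part.eq_some_iff.2 (zb_sound hstab h)
    have hz : m ∉ Z := by
      intro hmem
      have := (hZ m).1 hmem
      rw [hev] at this
      exact absurd (Part.some_inj.1 this) (by norm_num)
    rw [h, chib, decide_eq_false hz]
    simp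
  · have hev : OCode.eval (chi (WSet e)) (OCode.ofNat ci) m = Part.some 1 :=
      Part.eq_some_iff.2 (zb_sound hstab h)
    rw [h, chib, decide_eq_true ((hZ m).2 hev)]
    simp

theorem andE {p q : Bool} (h : (p && q) = true) : p = true ∧ q = true := by
  simpa using h

theorem main_backward {T : List Bool → Bool} {e a : ℕ}
    (H : ∀ n, ∃ q, ∀ t, RMat T (e, a, n, q, t) = true) :
    ∃ Z : Set ℕ, (∀ n, T (seg Z n) = true) ∧ TuringEquiv Z (WSet e) := by
  set ci := a.unpair.1 with hci
  set di := a.unpair.2 with hdi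
  have unpack : ∀ n, ∃ s k k2 w,
      stab e s k ∧
      (∀ m < n + 1, zb e s k ci m = some 0 ∨ zb e s k ci m = some 1) ∧
      T (zetaL e s k ci n) = true ∧
      (∀ i < k2, zb e s k ci i = some 0 ∨ zb e s k ci i = some 1) ∧
      Nat.Partrec.Code.evaln s (trF (zetaL e s k ci k2) di) n = some w ∧
      ((w = 1 ∧ WsB e s n = true) ∨ (w = 0 ∧ ∀ t, WsB e t n = false)) := by
    intro n
    obtain ⟨q, hq⟩ := H n
    refine ⟨q.unpair.1, q.unpair.2.unpair.1, q.unpair.2.unpair.2.unpair.1,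
      q.unpair.2.unpair.2.unpair.2, ?_, ?_, ?_, ?_, ?_, ?_⟩
    · intro t i hi hw
      obtain ⟨h12345, h6⟩ := andE (hq t)
      obtain ⟨h1234, h5⟩ := andE h12345
      obtain ⟨h123, h4⟩ := andE h1234
      obtain ⟨h12, h3⟩ := andE h123
      obtain ⟨h1, h2⟩ := andE h12
      rw [ballB_iff] at h1
      have := h1 i hi
      rw [hw] at this
      simpa using this
    · intro m hm
      obtain ⟨h12345, h6⟩ := andE (hq 0)
      obtain ⟨h1234, h5⟩ := andE h12345
      obtain ⟨h123, h4⟩ := andE h1234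
      obtain ⟨h12, h3⟩ := andE h123
      obtain ⟨h1, h2⟩ := andE h12
      rw [ballB_iff] at h2
      have := h2 m hm
      simpa using this
    · obtain ⟨h12345, h6⟩ := andE (hq 0)
      obtain ⟨h1234, h5⟩ := andE h12345
      obtain ⟨h123, h4⟩ := andE h1234
      obtain ⟨h12, h3⟩ := andE h123
      exact h3
    · intro i hi
      obtain ⟨h12345, h6⟩ := andE (hq 0)
      obtain ⟨h1234, h5⟩ := andE h12345
      obtain ⟨h123, h4⟩ := andE h1234
      rw [ballB_iff] at h4
      have := h4 i hi
      simpa using this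
    · obtain ⟨h12345, h6⟩ := andE (hq 0)
      obtain ⟨h1234, h5⟩ := andE h12345
      simpa using h5
    · by_cases hw1 : q.unpair.2.unpair.2.unpair.2 = 1
      · left
        refine ⟨hw1, ?_⟩
        obtain ⟨h12345, h6⟩ := andE (hq 0)
        rw [if_pos hw1] at h6
        exact h6
      · right
        obtain ⟨h12345, h60⟩ := andE (hq 0)
        rw [if_neg hw1, Bool.and_eq_true] at h60
        refine ⟨by simpa using h60.1, fun t => ?_⟩
        obtain ⟨h12345', h6⟩ := andE (hq t)
        rw [if_neg hw1, Bool.and_eq_true] at h6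
        simpa using h6.2
  set Z : Set ℕ :=
    {m | OCode.eval (chi (WSet e)) (OCode.ofNat ci) m = Part.some 1} with hZdef
  have hZ : ∀ m, m ∈ Z ↔
      OCode.eval (chi (WSet e)) (OCode.ofNat ci) m = Part.some 1 :=
    fun m => Iff.rfl
  have tot : ∀ m, ∃ v, (v = 0 ∨ v = 1) ∧
      OCode.eval (chi (WSet e)) (OCode.ofNat ci) m = Part.some v := by
    intro m
    obtain ⟨s, k, k2, w, hstab, hC2, _, _, _, _⟩ := unpack m
    rcases hC2 m (Nat.lt_succ_self m) with h | h
    · exact ⟨0, Or.inl rfl, Part.eq_some_iff.2 (zb_sound hstab h)⟩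
    · exact ⟨1, Or.inr rfl, Part.eq_some_iff.2 (zb_sound hstab h)⟩
  refine ⟨Z, ?_, ⟨OCode.ofNat ci, ?_⟩, ⟨OCode.ofNat di, ?_⟩⟩
  · -- the tree condition
    intro n
    obtain ⟨s, k, k2, w, hstab, hC2, hC3, _, _, _⟩ := unpack n
    rwa [zeta_eq_seg Z hZ hstab
      (fun i hi => hC2 i (lt_trans hi (Nat.lt_succ_self n)))] at hC3
  · -- Z ≤ W
    intro m
    obtain ⟨v, hv01, hev⟩ := tot m
    rcases hv01 with rfl | rfl
    · have hz : m ∉ Z := by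
        intro hmem
        have := (hZ m).1 hmem
        rw [hev] at this
        exact absurd (Part.some_inj.1 this) (by norm_num)
      rw [if_neg hz]
      exact hev
    · rw [if_pos ((hZ m).2 hev)]
      exact hev
  · -- W ≤ Z
    intro n
    obtain ⟨s, k, k2, w, hstab, _, _, hC4, hC5, hC6⟩ := unpack n
    rw [zeta_eq_seg Z hZ hstab hC4] at hC5
    have hw : w ∈ OCode.eval (chi Z) (OCode.ofNat di) n := evaln_seg_sound hC5
    rcases hC6 with ⟨rfl, hWs⟩ | ⟨rfl, hWt⟩
    · rw [if_pos (WsB_sound hWs)]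
      exact Part.eq_some_iff.2 hw
    · have hnW : n ∉ WSet e := by
        intro hn
        obtain ⟨t, ht⟩ := WsB_complete.1 hn
        rw [hWt t] at ht
        exact absurd ht (by simp)
      rw [if_neg hnW]
      exact Part.eq_some_iff.2 hw

end Stmt6

/-- For a `Π⁰₁` class `P`, the index set
`{ e : deg (W_e) is realized in P }` is `Σ⁰₄`. -/
theorem stmt6 (P : Set (Set ℕ)) (hP : Pi01Class P) :
    Sigma04 { e | ∃ Z ∈ P, TuringEquiv Z (WSet e) } := by
  obtain ⟨T, hT, hPT⟩ := hP
  refine ⟨Stmt6.RMat T, Stmt6.RMat_computable hT, fun e => ?_⟩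
  constructor
  · rintro ⟨Z, hZP, ⟨cz, hcz⟩, ⟨cw, hcw⟩⟩
    have hZT : ∀ n, T (Stmt6.seg Z n) = true := (hPT Z).1 hZP
    exact ⟨Nat.pair (Stmt6.encodeO cz) (Stmt6.encodeO cw),
      Stmt6.main_forward hZT cz cw hcz hcw⟩
  · rintro ⟨a, hA⟩
    obtain ⟨Z, hZT, heq⟩ := Stmt6.main_backward hA
    exact ⟨Z, (hPT Z).2 hZT, heq⟩
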